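/- Let ψ : K → M be a surjective continuous almost open map between topological spaces, let X be a topological space, and let 0 < α ≤ ω₁. If B_α(X,K) is a dense subspace of the product K^X and B_α(X,K) is nonmeager (respectively, a Baire space), then B_α(X,M) is nonmeager (respectively, a Baire space). -/

import Mathlib

open Set Filter Topology Ordinal TopologicalSpace

/-- A map `φ : K → M` is *almost open* if the image of every nonempty open set
has nonempty interior. -/
def AlmostOpenMap {K M : Type*} [TopologicalSpace K] [TopologicalSpace M] (φ : K → M) : Prop :=
  ∀ V : Set K, IsOpen V → V.Nonempty → (interior (φ '' V)).Nonempty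

/-- The Baire class `B_α(X,Y)`: `B_0(X,Y)` is the set of continuous functions, and for `α > 0`,
`B_α(X,Y)` is the set of pointwise limits of sequences from `C(X,Y) ∪ ⋃_{β<α} B_β(X,Y)`. -/
noncomputable def BaireClass (X Y : Type*) [TopologicalSpace X] [TopologicalSpace Y]
    (α : Ordinal.{0}) : Set (X → Y) :=
  if α = 0 then {f | Continuous f}
  else {f | ∃ g : ℕ → X → Y,
    (∀ n, Continuous (g n) ∨ ∃ β, ∃ _ : β < α, g n ∈ BaireClass X Y β) ∧
    ∀ x, Filter.Tendsto (fun n => g n x) Filter.atTop (nhds (f x))}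
termination_by α

/-- `B_α(X,Y)` for `0 ≤ α ≤ ω₁`, where `B_{ω₁}(X,Y) = ⋃_{β<ω₁} B_β(X,Y)`. -/
noncomputable def BaireFun (X Y : Type*) [TopologicalSpace X] [TopologicalSpace Y]
    (α : Ordinal.{0}) : Set (X → Y) :=
  if α = ω_ 1 then ⋃ β ∈ Set.Iio (ω_ 1 : Ordinal.{0}), BaireClass X Y β
  else BaireClass X Y α

section aux
variable {X K M : Type*} [TopologicalSpace X] [TopologicalSpace K] [TopologicalSpace M]

lemma comp_mem_baireClass {ψ : K → M} (hcont : Continuous ψ) :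
    ∀ (β : Ordinal.{0}) (f : X → K), f ∈ BaireClass X K β → (ψ ∘ f) ∈ BaireClass X M β := by
  intro β
  induction β using Ordinal.induction with
  | h β ih =>
    intro f hf
    by_cases hβ : β = 0
    · subst hβ
      rw [BaireClass] at hf ⊢
      simp only [if_pos rfl, Set.mem_setOf_eq] at hf ⊢
      exact hcont.comp hf
    · rw [BaireClass] at hf ⊢
      simp only [if_neg hβ, Set.mem_setOf_eq] at hf ⊢
      obtain ⟨g, hg, hlim⟩ := hf
      refine ⟨fun n => ψ ∘ g n, fun n => ?_, fun x => ?_⟩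
      · rcases hg n with h | ⟨γ, hγ, hmem⟩
        · exact Or.inl (hcont.comp h)
        · exact Or.inr ⟨γ, hγ, ih γ hγ _ hmem⟩
      · exact (hcont.tendsto (f x)).comp (hlim x)

lemma comp_mem_baireFun {ψ : K → M} (hcont : Continuous ψ) (α : Ordinal.{0}) (f : X → K)
    (hf : f ∈ BaireFun X K α) : (ψ ∘ f) ∈ BaireFun X M α := by
  rw [BaireFun] at hf ⊢
  by_cases hα : α = ω_ 1
  · simp only [if_pos hα] at hf ⊢
    obtain ⟨s, ⟨β, rfl⟩, hs⟩ := hf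
    simp only [Set.mem_iUnion] at hs
    obtain ⟨hβ, hmem⟩ := hs
    exact Set.mem_biUnion hβ (comp_mem_baireClass hcont β f hmem)
  · simp only [if_neg hα] at hf ⊢
    exact comp_mem_baireClass hcont α f hf
end aux
section amb
variable {X K M : Type*} [TopologicalSpace X] [TopologicalSpace K] [TopologicalSpace M]

/-- Image of a dense set under coordinatewise composition with a surjection is dense. -/
lemma dense_comp_image {ψ : K → M} (hcont : Continuous ψ) (hsurj : Function.Surjective ψ)
    {D : Set (X → K)} (hD : Dense D) :
    Dense ((fun f : X → K => ψ ∘ f) '' D) := by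
  rw [dense_iff_inter_open]
  rintro U hU ⟨g, hgU⟩
  obtain ⟨J, v, hJv, hJU⟩ := isOpen_pi_iff.mp hU g hgU
  have hBox : IsOpen ((J : Set X).pi fun x => ψ ⁻¹' v x) :=
    isOpen_set_pi J.finite_toSet fun x hx => ((hJv x hx).1).preimage hcont
  have hBne : ((J : Set X).pi fun x => ψ ⁻¹' v x).Nonempty := by
    rw [Set.pi_nonempty_iff]
    intro x
    obtain ⟨k, hk⟩ := hsurj (g x)
    exact ⟨k, fun hx => by simp [Set.mem_preimage, hk, (hJv x hx).2]⟩
  obtain ⟨f, hfB, hfD⟩ := hD.inter_open_nonempty _ hBox hBne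
  refine ⟨ψ ∘ f, hJU fun x hx => hfB x hx, ⟨f, hfD, rfl⟩⟩

/-- Key feeble-openness lemma at the ambient level. -/
lemma key_feebly {ψ : K → M} (hcont : Continuous ψ) (hsurj : Function.Surjective ψ)
    (hao : AlmostOpenMap ψ) {D : Set (X → K)} (hD : Dense D)
    {U : Set (X → K)} (hU : IsOpen U) (hne : (U ∩ D).Nonempty) :
    ∃ W : Set (X → M), IsOpen W ∧ W.Nonempty ∧
      W ⊆ closure ((fun f : X → K => ψ ∘ f) '' (U ∩ D)) := by
  obtain ⟨f0, hf0U, hf0D⟩ := hne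
  obtain ⟨I, u, hIu, hIU⟩ := isOpen_pi_iff.mp hU f0 hf0U
  refine ⟨(I : Set X).pi fun x => interior (ψ '' u x), ?_, ?_, ?_⟩
  · exact isOpen_set_pi I.finite_toSet fun x _ => isOpen_interior
  · rw [Set.pi_nonempty_iff]
    intro x
    by_cases hx : x ∈ (I : Set X)
    · obtain ⟨m, hm⟩ := hao (u x) (hIu x hx).1 ⟨f0 x, (hIu x hx).2⟩
      exact ⟨m, fun _ => hm⟩
    · exact ⟨ψ (f0 x), fun h => absurd h hx⟩
  · intro g hg
    rw [mem_closure_iff]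
    intro O hO hgO
    obtain ⟨J, v, hJv, hJO⟩ := isOpen_pi_iff.mp hO g hgO
    classical
    set t : X → Set K := fun x =>
      (if x ∈ I then u x else Set.univ) ∩ ψ ⁻¹' (if x ∈ J then v x else Set.univ) with ht
    have htO : ∀ x, IsOpen (t x) := by
      intro x
      apply IsOpen.inter
      · split_ifs with h
        · exact (hIu x h).1
        · exact isOpen_univ
      · apply IsOpen.preimage hcont
        split_ifs with h
        · exact (hJv x h).1
        · exact isOpen_univ
    have hBox : IsOpen (((I ∪ J : Finset X) : Set X).pi t) :=
      isOpen_set_pi (I ∪ J).finite_toSet fun x _ => htO x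
    have hBne : (((I ∪ J : Finset X) : Set X).pi t).Nonempty := by
      rw [Set.pi_nonempty_iff]
      intro x
      by_cases hxI : x ∈ I
      · have : g x ∈ ψ '' u x := interior_subset (hg x hxI)
        obtain ⟨k, hku, hkg⟩ := this
        refine ⟨k, fun _ => ?_⟩
        simp only [ht, Set.mem_inter_iff, Set.mem_preimage, if_pos hxI, hkg]
        refine ⟨hku, ?_⟩
        split_ifs with hxJ
        · exact (hJv x hxJ).2
        · exact Set.mem_univ _
      · obtain ⟨k, hk⟩ := hsurj (g x)
        refine ⟨k, fun _ => ?_⟩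
        simp only [ht, Set.mem_inter_iff, Set.mem_preimage, if_neg hxI, hk]
        refine ⟨Set.mem_univ _, ?_⟩
        split_ifs with hxJ
        · exact (hJv x hxJ).2
        · exact Set.mem_univ _
    obtain ⟨f, hfB, hfD⟩ := hD.inter_open_nonempty _ hBox hBne
    have hfU : f ∈ U := by
      apply hIU
      intro x hx
      have := hfB x (by simp [Finset.mem_union]; exact Or.inl hx)
      simpa [ht, if_pos (show x ∈ I from hx)] using this.1
    have hfO : ψ ∘ f ∈ O := by
      apply hJO
      intro x hx
      have := hfB x (by simp [Finset.mem_union]; exact Or.inr hx)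
      have h2 := this.2
      rw [if_pos (show x ∈ J from hx)] at h2
      exact h2
    exact ⟨ψ ∘ f, hfO, ⟨f, ⟨hfU, hfD⟩, rfl⟩⟩
end amb
/-- Transfer lemma. -/
lemma transfer_feebly {A B : Type*} [TopologicalSpace A] [TopologicalSpace B]
    (F : A → B) (hc : Continuous F) (hd : DenseRange F)
    (hfo : ∀ V : Set A, IsOpen V → V.Nonempty → (interior (closure (F '' V))).Nonempty) :
    (¬ IsMeagre (Set.univ : Set A) → ¬ IsMeagre (Set.univ : Set B)) ∧
    (BaireSpace A → BaireSpace B) := by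
  constructor
  · intro hA hB
    apply hA
    rw [isMeagre_iff_countable_union_isNowhereDense] at hB ⊢
    obtain ⟨S, hS, hScount, hScover⟩ := hB
    refine ⟨(fun t => F ⁻¹' closure t) '' S, ?_, hScount.image _, ?_⟩
    · rintro _ ⟨t, htS, rfl⟩
      have hcl : IsClosed (F ⁻¹' closure t) := isClosed_closure.preimage hc
      rw [IsNowhereDense, hcl.closure_eq]
      by_contra hne
      obtain ⟨a, ha⟩ := Set.nonempty_iff_ne_empty.mpr hne
      have h1 := hfo _ isOpen_interior ⟨a, ha⟩
      have h2 : F '' interior (F ⁻¹' closure t) ⊆ closure t :=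
        (Set.image_mono interior_subset).trans (Set.image_preimage_subset F _)
      have h3 : closure (F '' interior (F ⁻¹' closure t)) ⊆ closure t := by
        simpa using closure_mono h2
      have h4 := (interior_mono h3).trans (le_of_eq (hS t htS))
      exact Set.not_nonempty_empty (h1.mono h4)
    · intro a _
      obtain ⟨t, htS, hFt⟩ := hScover (Set.mem_univ (F a))
      exact ⟨F ⁻¹' closure t, ⟨t, htS, rfl⟩, subset_closure hFt⟩
  · intro hA
    constructor
    intro f hopen hdense
    rw [dense_iff_inter_open]
    rintro U hU ⟨b, hbU⟩
    have hg : ∀ n, Dense (F ⁻¹' f n) := by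
      intro n
      rw [dense_iff_inter_open]
      rintro V hV hVne
      obtain ⟨p, hp⟩ := hfo V hV hVne
      obtain ⟨q, hq⟩ := (hdense n).inter_open_nonempty _ isOpen_interior ⟨p, hp⟩
      have hqcl : q ∈ closure (F '' V) := interior_subset hq.1
      obtain ⟨r, hr⟩ := mem_closure_iff.mp hqcl (interior (closure (F '' V)) ∩ f n)
        (isOpen_interior.inter (hopen n)) ⟨hq.1, hq.2⟩
      obtain ⟨a, haV, rfl⟩ := hr.2
      exact ⟨a, haV, hr.1.2⟩
    have hdcap : Dense (⋂ n, F ⁻¹' f n) :=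
      hA.baire_property _ (fun n => (hopen n).preimage hc) hg
    obtain ⟨a0, ha0⟩ := hd.exists_mem_open hU ⟨b, hbU⟩
    obtain ⟨a, haU, ha⟩ := hdcap.inter_open_nonempty _ (hU.preimage hc) ⟨a0, ha0⟩
    refine ⟨F a, haU, ?_⟩
    simp only [Set.mem_iInter] at ha ⊢
    exact fun n => ha n

theorem statement3 {X K M : Type*} [TopologicalSpace X] [T35Space X]
    [TopologicalSpace K] [T35Space K] [TopologicalSpace M] [T35Space M]
    (ψ : K → M) (hsurj : Function.Surjective ψ) (hcont : Continuous ψ)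
    (hao : AlmostOpenMap ψ) (α : Ordinal.{0}) (hα0 : 0 < α) (hα1 : α ≤ ω_ 1)
    (hdense : Dense (BaireFun X K α)) :
    (¬ IsMeagre (Set.univ : Set ↥(BaireFun X K α)) →
      ¬ IsMeagre (Set.univ : Set ↥(BaireFun X M α))) ∧
    (BaireSpace ↥(BaireFun X K α) → BaireSpace ↥(BaireFun X M α)) := by
  set D := BaireFun X K α with hD
  set E := BaireFun X M α with hE
  have hmap : ∀ f ∈ D, ψ ∘ f ∈ E := fun f hf => comp_mem_baireFun hcont α f hf
  set F : ↥D → ↥E := fun f => ⟨ψ ∘ f.1, hmap f.1 f.2⟩ with hF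
  have hFc : Continuous F := by
    apply Continuous.subtype_mk
    exact continuous_pi fun x => hcont.comp ((continuous_apply x).comp continuous_subtype_val)
  -- image identity for open preimages
  have himg : ∀ U : Set (X → K),
      Subtype.val '' (F '' (Subtype.val ⁻¹' U)) = (fun f : X → K => ψ ∘ f) '' (U ∩ D) := by
    intro U
    ext m
    constructor
    · rintro ⟨_, ⟨⟨f, hfD⟩, hfU, rfl⟩, rfl⟩
      exact ⟨f, ⟨hfU, hfD⟩, rfl⟩
    · rintro ⟨f, ⟨hfU, hfD⟩, rfl⟩
      exact ⟨_, ⟨⟨f, hfD⟩, hfU, rfl⟩, rfl⟩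
  have hFd : DenseRange F := by
    rw [DenseRange, dense_iff_inter_open]
    rintro O hO ⟨e, heO⟩
    obtain ⟨U, hUo, rfl⟩ := isOpen_induced_iff.mp hO
    obtain ⟨m, hmU, f, hfD, hfm⟩ :=
      (dense_comp_image hcont hsurj hdense).inter_open_nonempty U hUo ⟨e.1, heO⟩
    refine ⟨⟨m, ?_⟩, hmU, ⟨⟨f, hfD⟩, ?_⟩⟩
    · rw [← hfm]; exact hmap f hfD
    · simp only [hF]
      exact Subtype.ext hfm
  have hfo : ∀ V : Set ↥D, IsOpen V → V.Nonempty →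
      (interior (closure (F '' V))).Nonempty := by
    rintro V hV ⟨f0, hf0⟩
    obtain ⟨U, hUo, rfl⟩ := isOpen_induced_iff.mp hV
    have hne : (U ∩ D).Nonempty := ⟨f0.1, hf0, f0.2⟩
    obtain ⟨W, hWo, hWne, hWsub⟩ := key_feebly hcont hsurj hao hdense hUo hne
    -- W meets the image set
    obtain ⟨w, hw⟩ := hWne
    obtain ⟨m, hmW, hmImg⟩ := mem_closure_iff.mp (hWsub hw) W hWo hw
    have hmE : m ∈ E := by
      obtain ⟨f, hf, rfl⟩ := hmImg
      exact hmap f hf.2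
    have hopen' : IsOpen (Subtype.val ⁻¹' W : Set ↥E) := hWo.preimage continuous_subtype_val
    have hsub' : (Subtype.val ⁻¹' W : Set ↥E) ⊆ closure (F '' (Subtype.val ⁻¹' U)) := by
      intro y hy
      rw [closure_subtype, himg U]
      exact hWsub hy
    refine ⟨⟨m, hmE⟩, ?_⟩
    exact (hopen'.subset_interior_iff.mpr hsub') hmW
  exact transfer_feebly F hFc hFd hfo
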